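/- Let R be a finite (not necessarily unital, not necessarily commutative) ring and S a subring of R. Then Pr(S, R) = Pr(S) if and only if S + C_R(r) = R for all r ∈ S. -/

import Mathlib

open scoped Pointwise

/-- The probability that a randomly chosen pair, one element from `S` and one from `T`,
commutes (multiplicatively). For a subring `S` of a finite ring `R` this gives
`Pr(S, R) = relCommProb R S Set.univ`, `Pr(R) = relCommProb R Set.univ Set.univ`, etc. -/
noncomputable def relCommProb (R : Type*) [NonUnitalRing R] (S T : Set R) : ℚ :=
  (Nat.card {p : S × T // (p.1 : R) * (p.2 : R) = (p.2 : R) * (p.1 : R)} : ℚ) /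
    ((Nat.card S : ℚ) * (Nat.card T : ℚ))

/-- `C_S(r)`: the centralizer of `r` in the subring `S`, as an additive subgroup of `R`.
Taking `S = ⊤` gives `C_R(r)`. -/
def centIn {R : Type*} [NonUnitalRing R] (S : NonUnitalSubring R) (r : R) : AddSubgroup R where
  carrier := {x | x ∈ S ∧ x * r = r * x}
  zero_mem' := ⟨S.zero_mem, by rw [zero_mul, mul_zero]⟩
  add_mem' := by
    rintro a b ⟨ha, ha'⟩ ⟨hb, hb'⟩
    exact ⟨S.add_mem ha hb, by rw [add_mul, mul_add, ha', hb']⟩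
  neg_mem' := by
    rintro a ⟨ha, ha'⟩
    exact ⟨S.neg_mem ha, by rw [neg_mul, mul_neg, ha']⟩

/-- `Z(S, R)`: the elements of the subring `S` commuting with every element of `R`,
as an additive subgroup of `R`.  Taking `S = ⊤` gives the center `Z(R)`. -/
def zCenter {R : Type*} [NonUnitalRing R] (S : NonUnitalSubring R) : AddSubgroup R where
  carrier := {x | x ∈ S ∧ ∀ r : R, x * r = r * x}
  zero_mem' := ⟨S.zero_mem, fun r => by rw [zero_mul, mul_zero]⟩
  add_mem' := by
    rintro a b ⟨ha, ha'⟩ ⟨hb, hb'⟩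
    exact ⟨S.add_mem ha hb, fun r => by rw [add_mul, mul_add, ha' r, hb' r]⟩
  neg_mem' := by
    rintro a ⟨ha, ha'⟩
    exact ⟨S.neg_mem ha, fun r => by rw [neg_mul, mul_neg, ha' r]⟩

/-- `K(S, R)`: the set of additive commutators `s*r - r*s` with `s ∈ S`, `r ∈ R`. -/
def kSet {R : Type*} [NonUnitalRing R] (S : NonUnitalSubring R) : Set R :=
  {x | ∃ s ∈ S, ∃ r : R, x = s * r - r * s}

/-- `[S, R]`: the additive subgroup of `(R, +)` generated by `K(S, R)`. -/
def commSub {R : Type*} [NonUnitalRing R] (S : NonUnitalSubring R) : AddSubgroup R :=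
  AddSubgroup.closure (kSet S)

/-- `[x, R]`: the additive subgroup of all commutators `x*y - y*x`, `y ∈ R`. -/
def elemComm {R : Type*} [NonUnitalRing R] (x : R) : AddSubgroup R where
  carrier := {z | ∃ y : R, z = x * y - y * x}
  zero_mem' := ⟨0, by simp⟩
  add_mem' := by
    rintro a b ⟨y, rfl⟩ ⟨z, rfl⟩
    exact ⟨y + z, by rw [mul_add, add_mul]; abel⟩
  neg_mem' := by
    rintro a ⟨y, rfl⟩
    exact ⟨-y, by rw [mul_neg, neg_mul]; abel⟩

section Aux

lemma mem_centIn {R : Type*} [NonUnitalRing R] {S : NonUnitalSubring R} {r x : R} :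
    x ∈ centIn S r ↔ x ∈ S ∧ x * r = r * x := Iff.rfl

lemma aux_card_mul_relindex {G : Type*} [AddGroup G] {H K : AddSubgroup G} (h : H ≤ K) :
    Nat.card H * H.relIndex K = Nat.card K := by
  rw [← Nat.card_congr (AddSubgroup.addSubgroupOfEquivOfLe h).toEquiv]
  exact AddSubgroup.card_mul_index (H.addSubgroupOf K)

lemma aux_card_sup_mul_card_inf {G : Type*} [AddCommGroup G] (A B : AddSubgroup G) :
    Nat.card (A ⊔ B : AddSubgroup G) * Nat.card (A ⊓ B : AddSubgroup G) =
      Nat.card A * Nat.card B := by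
  have h1 : Nat.card (A ⊓ B : AddSubgroup G) * (A ⊓ B).relIndex A = Nat.card A :=
    aux_card_mul_relindex inf_le_left
  have h2 : Nat.card B * B.relIndex (A ⊔ B) = Nat.card (A ⊔ B : AddSubgroup G) :=
    aux_card_mul_relindex le_sup_right
  rw [AddSubgroup.relIndex_sup_right] at h2
  rw [AddSubgroup.inf_relIndex_left] at h1
  rw [← h2, ← h1]; ring

lemma aux_card_subtype_prod {α β : Type*} [Fintype α] [Fintype β] (p : α → β → Prop) :
    Nat.card {x : α × β // p x.1 x.2} = ∑ a : α, Nat.card {b : β // p a b} := by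
  classical
  rw [Nat.card_congr (Equiv.subtypeProdEquivSigmaSubtype p)]
  simp [Nat.card_eq_fintype_card]

lemma aux_div_iff (N1 N2 nS nR : ℕ) (h1 : 0 < nS) (h2 : 0 < nR) :
    ((N1 : ℚ) / ((nS : ℚ) * (nR : ℚ)) = (N2 : ℚ) / ((nS : ℚ) * (nS : ℚ))) ↔
      N1 * nS = N2 * nR := by
  have hnsq : ((nS : ℚ)) ≠ 0 := by exact_mod_cast h1.ne'
  have hnrq : ((nR : ℚ)) ≠ 0 := by exact_mod_cast h2.ne'
  rw [div_eq_div_iff (by positivity) (by positivity)]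
  constructor
  · intro h
    have h' : ((N1 : ℚ) * nS) * nS = ((N2 : ℚ) * nR) * nS := by linear_combination h
    have h'' : (N1 : ℚ) * nS = (N2 : ℚ) * nR := mul_right_cancel₀ hnsq h'
    exact_mod_cast h''
  · intro h
    have h'' : (N1 : ℚ) * nS = (N2 : ℚ) * nR := by exact_mod_cast h
    linear_combination (nS : ℚ) * h''

end Aux

/-- `Pr(S, R) = Pr(S)` iff `S + C_R(r) = R` for all `r ∈ S`. -/
theorem relCommProb_eq_commProb_self_iff {R : Type*} [NonUnitalRing R] [Fintype R]
    (S : NonUnitalSubring R) :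
    relCommProb R (S : Set R) Set.univ = relCommProb R (S : Set R) (S : Set R) ↔
      ∀ r ∈ S, (S : Set R) + ((centIn ⊤ r : AddSubgroup R) : Set R) = Set.univ := by
  classical
  have hS0 : (0:R) ∈ S := S.zero_mem
  haveI : Nonempty ((S : Set R) : Type _) := ⟨⟨0, hS0⟩⟩
  have hnSpos : 0 < Nat.card ((S : Set R) : Type _) := Nat.card_pos
  have hnRpos : 0 < Nat.card R := Nat.card_pos
  have hnU : Nat.card ((Set.univ : Set R) : Type _) = Nat.card R :=
    Nat.card_congr (Equiv.Set.univ R)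
  -- inner cardinalities
  have inner1 : ∀ a : (S : Set R), Nat.card {b : (Set.univ : Set R) // (a : R) * b = (b : R) * a}
      = Nat.card (centIn (⊤ : NonUnitalSubring R) (a : R)) := by
    intro a
    refine Nat.card_congr ⟨fun x => ⟨(x.1 : R), NonUnitalSubring.mem_top _, x.2.symm⟩,
      fun y => ⟨⟨(y.1 : R), Set.mem_univ _⟩, ((mem_centIn.mp y.2).2).symm⟩, ?_, ?_⟩ <;>
      intro x <;> rfl
  have inner2 : ∀ a : (S : Set R), Nat.card {b : (S : Set R) // (a : R) * b = (b : R) * a}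
      = Nat.card (centIn S (a : R)) := by
    intro a
    refine Nat.card_congr ⟨fun x => ⟨(x.1 : R), x.1.2, x.2.symm⟩,
      fun y => ⟨⟨(y.1 : R), (mem_centIn.mp y.2).1⟩, ((mem_centIn.mp y.2).2).symm⟩, ?_, ?_⟩ <;>
      intro x <;> rfl
  have hinf : ∀ r : R, centIn S r = S.toAddSubgroup ⊓ centIn (⊤ : NonUnitalSubring R) r := by
    intro r
    ext x
    simp [mem_centIn, AddSubgroup.mem_inf, NonUnitalSubring.mem_toAddSubgroup,
      NonUnitalSubring.mem_top]
  have hN1 : Nat.card {p : ((S : Set R) : Type _) × ((Set.univ : Set R) : Type _) //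
        (p.1 : R) * (p.2 : R) = (p.2 : R) * (p.1 : R)}
      = ∑ a : (S : Set R), Nat.card (centIn (⊤ : NonUnitalSubring R) (a : R)) := by
    rw [aux_card_subtype_prod (fun (a : ((S : Set R) : Type _))
      (b : ((Set.univ : Set R) : Type _)) => (a : R) * b = (b : R) * a)]
    exact Finset.sum_congr rfl fun a _ => inner1 a
  have hN2 : Nat.card {p : ((S : Set R) : Type _) × ((S : Set R) : Type _) //
        (p.1 : R) * (p.2 : R) = (p.2 : R) * (p.1 : R)}
      = ∑ a : (S : Set R), Nat.card (centIn S (a : R)) := by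
    rw [aux_card_subtype_prod (fun (a : ((S : Set R) : Type _))
      (b : ((S : Set R) : Type _)) => (a : R) * b = (b : R) * a)]
    exact Finset.sum_congr rfl fun a _ => inner2 a
  -- termwise key identity
  have key : ∀ a : (S : Set R),
      Nat.card (centIn (⊤ : NonUnitalSubring R) (a : R)) * Nat.card ((S : Set R) : Type _) =
      Nat.card (centIn S (a : R)) *
        Nat.card (S.toAddSubgroup ⊔ centIn (⊤ : NonUnitalSubring R) (a : R) :
          AddSubgroup R) := by
    intro a
    have h := aux_card_sup_mul_card_inf S.toAddSubgroup (centIn (⊤ : NonUnitalSubring R) (a : R))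
    rw [← hinf] at h
    have hcA : Nat.card S.toAddSubgroup = Nat.card ((S : Set R) : Type _) := rfl
    rw [hcA] at h
    rw [mul_comm] at h ⊢
    rw [← h]
  have hsuple : ∀ a : (S : Set R),
      Nat.card (S.toAddSubgroup ⊔ centIn (⊤ : NonUnitalSubring R) (a : R) : AddSubgroup R)
        ≤ Nat.card R :=
    fun _ => Nat.card_le_card_of_injective _ Subtype.val_injective
  have hIpos : ∀ a : (S : Set R), 0 < Nat.card (centIn S (a : R)) := by
    intro a
    haveI : Nonempty (centIn S (a : R)) := ⟨⟨0, (centIn S ((a : R))).zero_mem⟩⟩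
    exact Nat.card_pos
  have hle : ∀ a : (S : Set R),
      Nat.card (centIn (⊤ : NonUnitalSubring R) (a : R)) * Nat.card ((S : Set R) : Type _) ≤
      Nat.card (centIn S (a : R)) * Nat.card R := by
    intro a
    rw [key a]
    exact Nat.mul_le_mul_left _ (hsuple a)
  have hterm : ∀ a : (S : Set R),
      (Nat.card (centIn (⊤ : NonUnitalSubring R) (a : R)) * Nat.card ((S : Set R) : Type _) =
        Nat.card (centIn S (a : R)) * Nat.card R) ↔
      (S : Set R) + ((centIn (⊤ : NonUnitalSubring R) (a : R) : AddSubgroup R) : Set R)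
        = Set.univ := by
    intro a
    set B : AddSubgroup R := centIn (⊤ : NonUnitalSubring R) (a : R) with hB
    have hcoe : ((S.toAddSubgroup ⊔ B : AddSubgroup R) : Set R) = (S : Set R) + (B : Set R) :=
      AddSubgroup.add_normal S.toAddSubgroup B
    rw [key a]
    constructor
    · intro h
      have h1 : Nat.card (S.toAddSubgroup ⊔ B : AddSubgroup R) = Nat.card R :=
        Nat.eq_of_mul_eq_mul_left (hIpos a) h
      have h2 : (S.toAddSubgroup ⊔ B : AddSubgroup R) = ⊤ := AddSubgroup.eq_top_of_card_eq _ h1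
      rw [← hcoe, h2]
      rfl
    · intro h
      have h2 : (S.toAddSubgroup ⊔ B : AddSubgroup R) = ⊤ := by
        apply SetLike.coe_injective
        rw [hcoe, h]
        rfl
      rw [h2, AddSubgroup.card_top]
  -- put it together
  simp only [relCommProb]
  rw [hnU, aux_div_iff _ _ _ _ hnSpos hnRpos, hN1, hN2, Finset.sum_mul, Finset.sum_mul,
    Finset.sum_eq_sum_iff_of_le (fun a _ => hle a)]
  constructor
  · intro h r hr
    exact (hterm ⟨r, hr⟩).mp (h ⟨r, hr⟩ (Finset.mem_univ _))
  · intro h a _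
    exact (hterm a).mpr (h (a : R) a.2)
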